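/- Let (G, ρ) be a finitely generated marked group satisfying the word-problem assumption, (K, ρ) a G-field, and suppose V, W, W′ are K-irreducible varieties with W ⊆ ᵖV, W′ ⊆ ᵖW ∩ ᵖ·ᵖV and all projections W → ᵖⁱV, W′ → ᵖⁱW dominant. Then there exist field homomorphisms ρ′ : K(V) → K(W) and ρ″ : K(W) → K(W′) making (K(V), K(W), K(W′), ρ′, ρ″) a G-kernel; moreover there is a K-generic point a ∈ V(K(V)) whose image ρ′(a) is a K-generic point of W. -/

import Mathlib

universe u

noncomputable section

open MvPolynomial

set_option synthInstance.maxHeartbeats 1000000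
set_option maxHeartbeats 1000000
set_option linter.unusedSectionVars false

/-- The transform `ᵍV` of a variety under a field automorphism coming from the group
element `g`: the image of its ideal under the coefficient-wise action of `g`. -/
def actTransform {G : Type u} [Group G] {K : Type u} [Field K] [MulSemiringAction G K]
    {n : Type*} (g : G) (P : Ideal (MvPolynomial n K)) : Ideal (MvPolynomial n K) :=
  P.map (MvPolynomial.map (MulSemiringAction.toRingHom G K g))

/-- The function field `K(V)` of the variety given by the ideal `P`. -/
abbrev funField {K : Type u} [Field K] {n : Type*} (P : Ideal (MvPolynomial n K)) :=
  FractionRing (MvPolynomial n K ⧸ P)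

/-- The structure embedding `K → K(V)`. -/
def funFieldC {K : Type u} [Field K] {n : Type*} (P : Ideal (MvPolynomial n K)) :
    K →+* funField P :=
  (algebraMap (MvPolynomial n K ⧸ P) (funField P)).comp
    ((Ideal.Quotient.mk P).comp MvPolynomial.C)

/-- The coordinate functions of `K(V)` (the canonical `K`-generic point of `V`). -/
def funFieldX {K : Type u} [Field K] {n : Type*} (P : Ideal (MvPolynomial n K)) (i : n) :
    funField P :=
  algebraMap (MvPolynomial n K ⧸ P) (funField P) (Ideal.Quotient.mk P (MvPolynomial.X i))


section Helpers

variable {G : Type u} [Group G] {K : Type u} [Field K] [MulSemiringAction G K]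

lemma mapAct_bijective {σ : Type*} (g : G) :
    Function.Bijective
      (MvPolynomial.map (σ := σ) (MulSemiringAction.toRingHom G K g)) := by
  have h1 : (MulSemiringAction.toRingHom G K g⁻¹).comp
      (MulSemiringAction.toRingHom G K g) = RingHom.id K := by
    ext k; exact inv_smul_smul g k
  have h2 : (MulSemiringAction.toRingHom G K g).comp
      (MulSemiringAction.toRingHom G K g⁻¹) = RingHom.id K := by
    ext k; exact smul_inv_smul g k
  refine Function.bijective_iff_has_inverse.mpr
    ⟨MvPolynomial.map (MulSemiringAction.toRingHom G K g⁻¹), fun f => ?_, fun f => ?_⟩ <;>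
    rw [MvPolynomial.map_map] <;> simp [h1, h2, MvPolynomial.map_id]

variable {σ τ : Type*} (g : G) (e : σ → τ)
  (P : Ideal (MvPolynomial σ K)) [P.IsPrime]
  (Q : Ideal (MvPolynomial τ K)) [Q.IsPrime]

/-- The basic polynomial-level homomorphism `f ↦ rename e (map g f) mod Q`. -/
def preHom : MvPolynomial σ K →+* funField Q :=
  (((algebraMap (MvPolynomial τ K ⧸ Q) (funField Q)).comp (Ideal.Quotient.mk Q)).comp
    (MvPolynomial.rename e).toRingHom).comp
      (MvPolynomial.map (MulSemiringAction.toRingHom G K g))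

lemma preHom_eq_zero_iff
    (h : Q.comap (MvPolynomial.rename e).toRingHom = actTransform g P)
    (f : MvPolynomial σ K) : preHom g e Q f = 0 ↔ f ∈ P := by
  have hinj : Function.Injective
      (algebraMap (MvPolynomial τ K ⧸ Q) (funField Q)) :=
    IsFractionRing.injective _ _
  have : preHom g e Q f = algebraMap (MvPolynomial τ K ⧸ Q) (funField Q)
      (Ideal.Quotient.mk Q (MvPolynomial.rename e
        (MvPolynomial.map (MulSemiringAction.toRingHom G K g) f))) := rfl
  rw [this, ← map_zero (algebraMap (MvPolynomial τ K ⧸ Q) (funField Q)),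
    hinj.eq_iff, Ideal.Quotient.eq_zero_iff_mem]
  have hmem : (MvPolynomial.rename e
      (MvPolynomial.map (MulSemiringAction.toRingHom G K g) f) ∈ Q) ↔
      MvPolynomial.map (MulSemiringAction.toRingHom G K g) f ∈
        Q.comap (MvPolynomial.rename e).toRingHom := Iff.rfl
  rw [hmem, h, actTransform]
  constructor
  · intro hf
    have := Ideal.comap_map_of_bijective _ (mapAct_bijective (σ := σ) (K := K) g)
      (I := P)
    rw [← this]; exact hf
  · intro hf; exact Ideal.mem_map_of_mem _ hf

/-- The induced homomorphism of function fields. -/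
def kernelHom (h : Q.comap (MvPolynomial.rename e).toRingHom = actTransform g P) :
    funField P →+* funField Q :=
  IsFractionRing.lift (g := Ideal.Quotient.lift P (preHom g e Q)
      (fun a ha => (preHom_eq_zero_iff g e P Q h a).mpr ha))
    (by
      rw [injective_iff_map_eq_zero]
      intro a ha
      obtain ⟨f, rfl⟩ := Ideal.Quotient.mk_surjective a
      rw [Ideal.Quotient.lift_mk] at ha
      exact Ideal.Quotient.eq_zero_iff_mem.mpr
        ((preHom_eq_zero_iff g e P Q h f).mp ha))

lemma kernelHom_algebraMap
    (h : Q.comap (MvPolynomial.rename e).toRingHom = actTransform g P)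
    (f : MvPolynomial σ K) :
    kernelHom g e P Q h (algebraMap (MvPolynomial σ K ⧸ P) (funField P)
      (Ideal.Quotient.mk P f)) = preHom g e Q f := by
  rw [kernelHom, IsFractionRing.lift_algebraMap, Ideal.Quotient.lift_mk]

lemma kernelHom_C (h : Q.comap (MvPolynomial.rename e).toRingHom = actTransform g P)
    (k : K) : kernelHom g e P Q h (funFieldC P k) = funFieldC Q (g • k) := by
  have : funFieldC P k = algebraMap (MvPolynomial σ K ⧸ P) (funField P)
      (Ideal.Quotient.mk P (MvPolynomial.C k)) := rfl
  rw [this, kernelHom_algebraMap]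
  have : preHom g e Q (MvPolynomial.C k) =
      algebraMap (MvPolynomial τ K ⧸ Q) (funField Q)
        (Ideal.Quotient.mk Q (MvPolynomial.rename e
          (MvPolynomial.map (MulSemiringAction.toRingHom G K g)
            (MvPolynomial.C k)))) := rfl
  rw [this, MvPolynomial.map_C, MvPolynomial.rename_C]
  rfl

lemma kernelHom_X (h : Q.comap (MvPolynomial.rename e).toRingHom = actTransform g P)
    (s : σ) : kernelHom g e P Q h (funFieldX P s) = funFieldX Q (e s) := by
  have : funFieldX P s = algebraMap (MvPolynomial σ K ⧸ P) (funField P)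
      (Ideal.Quotient.mk P (MvPolynomial.X s)) := rfl
  rw [this, kernelHom_algebraMap]
  have : preHom g e Q (MvPolynomial.X s) =
      algebraMap (MvPolynomial τ K ⧸ Q) (funField Q)
        (Ideal.Quotient.mk Q (MvPolynomial.rename e
          (MvPolynomial.map (MulSemiringAction.toRingHom G K g)
            (MvPolynomial.X s)))) := rfl
  rw [this, MvPolynomial.map_X, MvPolynomial.rename_X]
  rfl

/-- A subfield of the function field containing all constants and coordinates is everything. -/
lemma subfield_eq_top (Q : Ideal (MvPolynomial τ K)) [Q.IsPrime]
    (S : Subfield (funField Q)) (hC : ∀ k : K, funFieldC Q k ∈ S)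
    (hX : ∀ s : τ, funFieldX Q s ∈ S) : S = ⊤ := by
  have halg : ∀ a : MvPolynomial τ K ⧸ Q,
      algebraMap (MvPolynomial τ K ⧸ Q) (funField Q) a ∈ S := by
    intro a
    obtain ⟨f, rfl⟩ := Ideal.Quotient.mk_surjective a
    induction f using MvPolynomial.induction_on with
    | C k => exact hC k
    | add p q hp hq => rw [map_add, map_add]; exact S.add_mem hp hq
    | mul_X p i hp =>
      rw [map_mul, map_mul]
      exact S.mul_mem hp (hX i)
  rw [eq_top_iff]
  intro x _
  obtain ⟨a, b, _, rfl⟩ := IsFractionRing.div_surjective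
    (A := MvPolynomial τ K ⧸ Q) x
  exact S.div_mem (halg a) (halg b)

end Helpers

/-- Let `(G, ρ)` be a finitely generated marked group (with `ρ 0 = 1`) satisfying the
word-problem assumption: `G` is presented by the generators `ρ` subject to the relations
`ρᵢρⱼ = ρₖρₗ` that hold among products of two generators. Let `K` be a `G`-field and let
`V, W, W′` be `K`-irreducible varieties (given by prime ideals `JV, JW, JW'`) with
`W ⊆ ᵖV`, `W′ ⊆ ᵖW ∩ ᵖ·ᵖV` and all projections `W → ᵖⁱV`, `W′ → ᵖⁱW` dominant (the
contraction conditions below, plus the diagonal conditions of `ᵖ·ᵖV`). Then there are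
field homomorphisms `ρ′ᵢ : K(V) → K(W)` and `ρ″ᵢ : K(W) → K(W′)` (characterized by their
values on constants and coordinates, with `ρ′₀, ρ″₀` the canonical inclusions) making
`(K(V), K(W), K(W′), ρ′, ρ″)` a `G`-kernel; moreover the canonical `K`-generic point
`a ∈ V(K(V))` has `ρ′(a)` a `K`-generic point of `W`. -/
theorem statement19 (G : Type u) [Group G] (m : ℕ) (ρ : Fin (m + 1) → G)
    (hρ0 : ρ 0 = 1)
    (hgen : Function.Surjective (FreeGroup.lift ρ : FreeGroup (Fin (m + 1)) →* G))
    (hpres : (FreeGroup.lift ρ : FreeGroup (Fin (m + 1)) →* G).ker =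
      Subgroup.normalClosure {w : FreeGroup (Fin (m + 1)) |
        ∃ i j k l : Fin (m + 1), ρ i * ρ j = ρ k * ρ l ∧
          w = FreeGroup.of i * FreeGroup.of j * (FreeGroup.of k * FreeGroup.of l)⁻¹})
    (K : Type u) [Field K] [MulSemiringAction G K]
    {n : ℕ} (JV : Ideal (MvPolynomial (Fin n) K)) [JV.IsPrime]
    (JW : Ideal (MvPolynomial (Fin (m + 1) × Fin n) K)) [JW.IsPrime]
    (JW' : Ideal (MvPolynomial (Fin (m + 1) × (Fin (m + 1) × Fin n)) K)) [JW'.IsPrime]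
    -- `W ⊆ ᵖV` with dominant projections
    (hWV : ∀ i : Fin (m + 1),
      JW.comap (MvPolynomial.rename fun s : Fin n => (i, s)).toRingHom
        = actTransform (ρ i) JV)
    -- `W′ ⊆ ᵖW` with dominant projections
    (hW'W : ∀ i : Fin (m + 1),
      JW'.comap (MvPolynomial.rename fun q : Fin (m + 1) × Fin n => (i, q)).toRingHom
        = actTransform (ρ i) JW)
    -- `W′ ⊆ ᵖ·ᵖV`: the word-problem diagonal conditions
    (hdiag : ∀ i j k l : Fin (m + 1), ρ i * ρ j = ρ k * ρ l → ∀ s : Fin n,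
      MvPolynomial.X (i, (j, s)) - MvPolynomial.X (k, (l, s)) ∈ JW') :
    ∃ (ρ' : Fin (m + 1) → (funField JV →+* funField JW))
      (ρ'' : Fin (m + 1) → (funField JW →+* funField JW')),
      -- each `ρ′ᵢ` extends the action of `ρ i` on `K` and is characterized on coordinates
      (∀ (i : Fin (m + 1)) (k : K), ρ' i (funFieldC JV k) = funFieldC JW (ρ i • k)) ∧
      (∀ (i : Fin (m + 1)) (s : Fin n), ρ' i (funFieldX JV s) = funFieldX JW (i, s)) ∧
      (∀ (i : Fin (m + 1)) (k : K), ρ'' i (funFieldC JW k) = funFieldC JW' (ρ i • k)) ∧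
      (∀ (i : Fin (m + 1)) (q : Fin (m + 1) × Fin n),
        ρ'' i (funFieldX JW q) = funFieldX JW' (i, q)) ∧
      -- the word-problem (kernel) condition
      (∀ i j k l : Fin (m + 1), ρ i * ρ j = ρ k * ρ l →
        ∀ z : funField JV, ρ'' i (ρ' j z) = ρ'' k (ρ' l z)) ∧
      -- generation: `L′ = ρ′₁(L)⋯ρ′ₘ(L)` and `L″ = ρ″₁(L′)⋯ρ″ₘ(L′)`
      Subfield.closure (⋃ i : Fin (m + 1), Set.range (ρ' i)) = (⊤ : Subfield (funField JW)) ∧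
      Subfield.closure (⋃ i : Fin (m + 1), Set.range (ρ'' i)) = (⊤ : Subfield (funField JW')) ∧
      -- moreover: `ρ′(a)` is a `K`-generic point of `W`
      (∀ f : MvPolynomial (Fin (m + 1) × Fin n) K,
        MvPolynomial.eval₂ (funFieldC JW) (fun p => ρ' p.1 (funFieldX JV p.2)) f = 0
          ↔ f ∈ JW) := by
  classical
  refine ⟨fun i => kernelHom (ρ i) (fun s : Fin n => (i, s)) JV JW (hWV i),
    fun i => kernelHom (ρ i) (fun q : Fin (m + 1) × Fin n => (i, q)) JW JW' (hW'W i),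
    fun i k => kernelHom_C _ _ _ _ (hWV i) k,
    fun i s => kernelHom_X _ _ _ _ (hWV i) s,
    fun i k => kernelHom_C _ _ _ _ (hW'W i) k,
    fun i q => kernelHom_X _ _ _ _ (hW'W i) q,
    ?_, ?_, ?_, ?_⟩
  · -- word-problem (kernel) condition
    intro i j k l hrel z
    have hcomp :
        (kernelHom (ρ i) (fun q : Fin (m + 1) × Fin n => (i, q)) JW JW' (hW'W i)).comp
          (kernelHom (ρ j) (fun s : Fin n => (j, s)) JV JW (hWV j)) =
        (kernelHom (ρ k) (fun q : Fin (m + 1) × Fin n => (k, q)) JW JW' (hW'W k)).comp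
          (kernelHom (ρ l) (fun s : Fin n => (l, s)) JV JW (hWV l)) := by
      apply IsLocalization.ringHom_ext (nonZeroDivisors (MvPolynomial (Fin n) K ⧸ JV))
      apply Ideal.Quotient.ringHom_ext
      apply MvPolynomial.ringHom_ext
      · intro r
        show (kernelHom (ρ i) _ JW JW' (hW'W i))
            ((kernelHom (ρ j) _ JV JW (hWV j)) (funFieldC JV r)) =
          (kernelHom (ρ k) _ JW JW' (hW'W k))
            ((kernelHom (ρ l) _ JV JW (hWV l)) (funFieldC JV r))
        rw [kernelHom_C, kernelHom_C, kernelHom_C, kernelHom_C, ← mul_smul, ← mul_smul,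
          hrel]
      · intro s
        show (kernelHom (ρ i) _ JW JW' (hW'W i))
            ((kernelHom (ρ j) _ JV JW (hWV j)) (funFieldX JV s)) =
          (kernelHom (ρ k) _ JW JW' (hW'W k))
            ((kernelHom (ρ l) _ JV JW (hWV l)) (funFieldX JV s))
        rw [kernelHom_X, kernelHom_X, kernelHom_X, kernelHom_X]
        exact congrArg (algebraMap _ _) (Ideal.Quotient.eq.mpr (hdiag i j k l hrel s))
    exact RingHom.congr_fun hcomp z
  · -- generation of K(W)
    apply subfield_eq_top
    · intro k
      apply Subfield.subset_closure
      refine Set.mem_iUnion.mpr ⟨0, ⟨funFieldC JV ((ρ 0)⁻¹ • k), ?_⟩⟩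
      rw [kernelHom_C, smul_inv_smul]
    · intro q
      apply Subfield.subset_closure
      refine Set.mem_iUnion.mpr ⟨q.1, ⟨funFieldX JV q.2, ?_⟩⟩
      rw [kernelHom_X]
  · -- generation of K(W′)
    apply subfield_eq_top
    · intro k
      apply Subfield.subset_closure
      refine Set.mem_iUnion.mpr ⟨0, ⟨funFieldC JW ((ρ 0)⁻¹ • k), ?_⟩⟩
      rw [kernelHom_C, smul_inv_smul]
    · intro q
      apply Subfield.subset_closure
      refine Set.mem_iUnion.mpr ⟨q.1, ⟨funFieldX JW q.2, ?_⟩⟩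
      rw [kernelHom_X]
  · -- genericity
    intro f
    have hfun : (fun p : Fin (m + 1) × Fin n =>
        kernelHom (ρ p.1) (fun s : Fin n => (p.1, s)) JV JW (hWV p.1)
          (funFieldX JV p.2)) = fun p => funFieldX JW p := by
      funext p
      exact kernelHom_X _ _ _ _ (hWV p.1) p.2
    rw [hfun]
    have heval : ∀ f' : MvPolynomial (Fin (m + 1) × Fin n) K,
        MvPolynomial.eval₂ (funFieldC JW) (funFieldX JW) f' =
          algebraMap (MvPolynomial (Fin (m + 1) × Fin n) K ⧸ JW) (funField JW)
            (Ideal.Quotient.mk JW f') := by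
      intro f'
      have := MvPolynomial.ringHom_ext
        (f := MvPolynomial.eval₂Hom (funFieldC JW) (funFieldX JW))
        (g := (algebraMap (MvPolynomial (Fin (m + 1) × Fin n) K ⧸ JW)
          (funField JW)).comp (Ideal.Quotient.mk JW))
        (fun r => by simp only [MvPolynomial.eval₂Hom_C, RingHom.comp_apply]; rfl)
        (fun s => by simp only [MvPolynomial.eval₂Hom_X', RingHom.comp_apply]; rfl)
      exact RingHom.congr_fun this f'
    rw [heval]
    rw [show (0 : funField JW) = algebraMap (MvPolynomial (Fin (m + 1) × Fin n) K ⧸ JW)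
        (funField JW) 0 by rw [map_zero],
      (IsFractionRing.injective (MvPolynomial (Fin (m + 1) × Fin n) K ⧸ JW)
        (funField JW)).eq_iff, Ideal.Quotient.eq_zero_iff_mem]
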